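/- With f = X(X−1)(X−α₁)(X−α₂)(X−α₃) ∈ 𝔽_p[X] and c_k the coefficient of X^k in f^{(p−1)/2}, one has ∑_{(α,β) ∈ 𝔽_p × 𝔽_p} ( f(α)·f(β) )^{(p−1)/2} = 2·c_{p−1}·c_{2p−2} + c_{p−1}² + c_{2p−2}². -/

import Mathlib

open Polynomial Finset

lemma sum_pow_zmod {p : ℕ} [Fact p.Prime] (k : ℕ) (hk : k ≠ 0) :
    ∑ x : ZMod p, x ^ k = if (p - 1) ∣ k then -1 else 0 := by
  classical
  have h := FiniteField.sum_pow_units (ZMod p) k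
  rw [ZMod.card] at h
  rw [← h]
  let φ : (ZMod p)ˣ ↪ ZMod p := ⟨fun x ↦ x, fun _ _ h ↦ Units.ext h⟩
  have huniv : univ.map φ = univ \ {0} := by
    ext x
    simp only [mem_map, mem_univ, Function.Embedding.coeFn_mk, true_and, mem_sdiff,
      mem_singleton, φ]
    exact isUnit_iff_ne_zero
  calc
    ∑ x : ZMod p, x ^ k = ∑ x ∈ univ \ {(0 : ZMod p)}, x ^ k := by
      rw [← Finset.sum_sdiff ({0} : Finset (ZMod p)).subset_univ, Finset.sum_singleton,
        zero_pow hk, add_zero]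
    _ = ∑ x : (ZMod p)ˣ, (x : ZMod p) ^ k := by
      rw [← huniv, Finset.sum_map]; rfl

/-- For the quintic `f = X(X-1)(X-α₁)(X-α₂)(X-α₃)` over `𝔽_p`, one has
`∑_{(α,β) ∈ 𝔽_p × 𝔽_p} (f(α)·f(β))^((p-1)/2) = 2 c_{p-1} c_{2p-2} + c_{p-1}² + c_{2p-2}²`. -/
theorem sum_ff_pow_eq (p : ℕ) [Fact p.Prime] (hp : 5 ≤ p)
    (α₁ α₂ α₃ : ZMod p)
    (h12 : α₁ ≠ α₂) (h13 : α₁ ≠ α₃) (h23 : α₂ ≠ α₃)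
    (h10 : α₁ ≠ 0) (h20 : α₂ ≠ 0) (h30 : α₃ ≠ 0)
    (h11 : α₁ ≠ 1) (h21 : α₂ ≠ 1) (h31 : α₃ ≠ 1)
    (f : Polynomial (ZMod p))
    (hf : f = X * (X - 1) * (X - C α₁) * (X - C α₂) * (X - C α₃))
    (c : ℕ → ZMod p) (hc : ∀ k, c k = (f ^ ((p - 1) / 2)).coeff k) :
    ∑ z : ZMod p × ZMod p, (f.eval z.1 * f.eval z.2) ^ ((p - 1) / 2) =
      2 * c (p - 1) * c (2 * p - 2) + c (p - 1) ^ 2 + c (2 * p - 2) ^ 2 := by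
  classical
  set s := (p - 1) / 2 with hs
  have hodd : Odd p := (Fact.out : p.Prime).odd_of_ne_two (by omega)
  have h2s : 2 * s = p - 1 := by
    obtain ⟨m, hm⟩ := hodd
    omega
  have hs2 : 2 ≤ s := by omega
  -- degree of f
  have hdeg : f.natDegree = 5 := by
    rw [hf]
    compute_degree!
  have hdegpow : (f ^ s).natDegree = 5 * s := by
    rw [natDegree_pow, hdeg]; ring
  -- the single-variable sum
  have key : ∑ x : ZMod p, f.eval x ^ s = -(c (p - 1) + c (2 * p - 2)) := by
    have heval : ∀ x : ZMod p, f.eval x ^ s =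
        ∑ i ∈ range (5 * s + 1), (f ^ s).coeff i * x ^ i := by
      intro x
      rw [← eval_pow, eval_eq_sum_range, hdegpow]
    simp_rw [heval]
    rw [Finset.sum_comm]
    have hterm : ∀ i ∈ range (5 * s + 1), i ∉ ({2 * s, 4 * s} : Finset ℕ) →
        ∑ x : ZMod p, (f ^ s).coeff i * x ^ i = 0 := by
      intro i hi hni
      rw [← Finset.mul_sum]
      rcases eq_or_ne i 0 with rfl | hi0
      · simp only [pow_zero, Finset.sum_const, Finset.card_univ, ZMod.card, nsmul_eq_mul,
          mul_one, ZMod.natCast_self, mul_zero]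
      · rw [sum_pow_zmod i hi0]
        rw [if_neg, mul_zero]
        intro hdvd
        obtain ⟨m, hm⟩ := hdvd
        simp only [Finset.mem_insert, Finset.mem_singleton] at hni
        simp only [Finset.mem_range] at hi
        rw [← h2s] at hm
        have hm3 : m < 3 := by
          by_contra hge
          push_neg at hge
          have h6 : 2 * s * 3 ≤ 2 * s * m := Nat.mul_le_mul_left _ hge
          omega
        interval_cases m <;> omega
    have hsub : ({2 * s, 4 * s} : Finset ℕ) ⊆ range (5 * s + 1) := by
      intro i hi
      simp only [Finset.mem_insert, Finset.mem_singleton] at hi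
      simp only [Finset.mem_range]
      omega
    rw [← Finset.sum_subset hsub (fun i hi hni => hterm i hi hni)]
    have hne : 2 * s ≠ 4 * s := by omega
    rw [Finset.sum_pair hne]
    have hS1 : ∑ x : ZMod p, x ^ (2 * s) = -1 := by
      rw [sum_pow_zmod _ (by omega), if_pos ⟨1, by omega⟩]
    have hS2 : ∑ x : ZMod p, x ^ (4 * s) = -1 := by
      rw [sum_pow_zmod _ (by omega), if_pos ⟨2, by omega⟩]
    rw [← Finset.mul_sum, ← Finset.mul_sum, hS1, hS2, hc, hc]
    have e1 : p - 1 = 2 * s := by omega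
    have e2 : 2 * p - 2 = 4 * s := by omega
    rw [e1, e2]
    ring
  calc ∑ z : ZMod p × ZMod p, (f.eval z.1 * f.eval z.2) ^ s
      = (∑ x : ZMod p, f.eval x ^ s) * (∑ x : ZMod p, f.eval x ^ s) := by
        rw [Fintype.sum_prod_type]
        simp_rw [mul_pow, ← Finset.mul_sum, ← Finset.sum_mul]
    _ = 2 * c (p - 1) * c (2 * p - 2) + c (p - 1) ^ 2 + c (2 * p - 2) ^ 2 := by
        rw [key]; ring
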